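/- For any fixed b ∈ M_+(n,m), the ray Scal(b) = {λ b : λ > 0} is a totally geodesic subspace of M_+(n,m) with the metric ⟨u,v⟩_a = tr(u(a^Ta)^{-1}v^T)√det(a^Ta): every geodesic with initial point λ₀ b and initial velocity c b stays in Scal(b) (as long as it exists), being given explicitly by a(t) = λ₀ (1 + c m t/(2λ₀))^{2/m} b. -/

import Mathlib

open Matrix

attribute [local instance] Matrix.frobeniusNormedAddCommGroup Matrix.frobeniusNormedSpace

noncomputable section

/-- Moore-Penrose pseudoinverse of a full-rank `n × m` matrix. -/
def aplus {n m : ℕ} (a : Matrix (Fin n) (Fin m) ℝ) : Matrix (Fin m) (Fin n) ℝ :=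
  (aᵀ * a)⁻¹ * aᵀ

/-- Right-hand side of the geodesic equation `a_tt = geoRHS (a, a_t)` of the
metric `⟨u,v⟩_a = tr(u (aᵀa)⁻¹ vᵀ)√det(aᵀa)` on full-rank `n × m` matrices. -/
def geoRHS {n m : ℕ} (x v : Matrix (Fin n) (Fin m) ℝ) : Matrix (Fin n) (Fin m) ℝ :=
  v * (xᵀ * x)⁻¹ * vᵀ * x + v * (xᵀ * x)⁻¹ * xᵀ * v - x * (xᵀ * x)⁻¹ * vᵀ * v
    + ((1 / 2) * Matrix.trace (v * (xᵀ * x)⁻¹ * vᵀ)) • x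
    - (Matrix.trace (v * (xᵀ * x)⁻¹ * xᵀ)) • v

lemma isUnit_det_of_rank_aux {n m : ℕ} (b : Matrix (Fin n) (Fin m) ℝ) (hb : b.rank = m) :
    IsUnit (bᵀ * b).det := by
  have h1 : (bᵀ * b).rank = m := by rw [Matrix.rank_transpose_mul_self, hb]
  rw [← Matrix.isUnit_iff_isUnit_det, ← Matrix.mulVec_surjective_iff_isUnit]
  have htop : LinearMap.range (bᵀ * b).mulVecLin = ⊤ := by
    apply Submodule.eq_top_of_finrank_eq
    unfold Matrix.rank at h1
    simp [h1]
  intro v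
  obtain ⟨w, hw⟩ := LinearMap.range_eq_top.mp htop v
  exact ⟨w, hw⟩

lemma geoRHS_smul_aux {n m : ℕ} (b : Matrix (Fin n) (Fin m) ℝ)
    (hu : IsUnit (bᵀ * b).det) (l μ : ℝ) (hl : l ≠ 0) :
    geoRHS (l • b) (μ • b) = (μ ^ 2 * (2 - (m : ℝ)) / (2 * l)) • b := by
  have hiM : (bᵀ * b)⁻¹ * (bᵀ * b) = 1 := Matrix.nonsing_inv_mul _ hu
  have hMi : (bᵀ * b) * (bᵀ * b)⁻¹ = 1 := Matrix.mul_nonsing_inv _ hu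
  have hx2 : ((l • b)ᵀ * (l • b))⁻¹ = (l * l)⁻¹ • (bᵀ * b)⁻¹ := by
    have h1 : (l • b)ᵀ * (l • b) = (l * l) • (bᵀ * b) := by
      rw [transpose_smul, Matrix.smul_mul, Matrix.mul_smul, smul_smul]
    rw [h1]
    refine Matrix.inv_eq_right_inv ?_
    rw [Matrix.smul_mul, Matrix.mul_smul, smul_smul, hMi, mul_inv_cancel₀ (mul_ne_zero hl hl),
      one_smul]
  have hproj : b * (bᵀ * b)⁻¹ * bᵀ * b = b := by
    rw [Matrix.mul_assoc, Matrix.mul_assoc, hiM, Matrix.mul_one]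
  have htr : Matrix.trace (b * (bᵀ * b)⁻¹ * bᵀ) = (m : ℝ) := by
    rw [Matrix.trace_mul_cycle, hMi, Matrix.trace_one]
    simp
  rw [geoRHS, hx2]
  simp only [transpose_smul, Matrix.smul_mul, Matrix.mul_smul, smul_smul, hproj, htr,
    Matrix.trace_smul, smul_eq_mul]
  rw [← add_smul, ← sub_smul, ← add_smul, ← sub_smul]
  congr 1
  field_simp
  ring

theorem stmt_12 {n m : ℕ} (hmn : m ≤ n) (hm : 0 < m)
    (b : Matrix (Fin n) (Fin m) ℝ) (hb : b.rank = m)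
    (lam0 c : ℝ) (hlam0 : 0 < lam0)
    (A : ℝ → Matrix (Fin n) (Fin m) ℝ)
    (hA : ∀ t, A t = (lam0 * (1 + c * (m : ℝ) * t / (2 * lam0)) ^ ((2 : ℝ) / (m : ℝ))) • b) :
    A 0 = lam0 • b ∧ HasDerivAt A (c • b) 0 ∧
      ∀ t, 0 < 1 + c * (m : ℝ) * t / (2 * lam0) →
        HasDerivAt (deriv A) (geoRHS (A t) (deriv A t)) t ∧
        ∃ lam : ℝ, 0 < lam ∧ A t = lam • b := by
  have hm' : (m : ℝ) ≠ 0 := Nat.cast_ne_zero.mpr hm.ne'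
  have hl0 : lam0 ≠ 0 := hlam0.ne'
  have hu : IsUnit (bᵀ * b).det := isUnit_det_of_rank_aux b hb
  set p : ℝ := (2 : ℝ) / (m : ℝ) with hp
  set f : ℝ → ℝ := fun t => 1 + c * (m : ℝ) * t / (2 * lam0) with hfdef
  have hf : ∀ t, HasDerivAt f (c * (m : ℝ) / (2 * lam0)) t := by
    intro t
    have h1 : HasDerivAt (fun t : ℝ => 1 + c * (m : ℝ) / (2 * lam0) * t)
        (c * (m : ℝ) / (2 * lam0)) t := by
      simpa using ((hasDerivAt_id t).const_mul (c * (m : ℝ) / (2 * lam0))).const_add 1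
    have h2 : f = fun t : ℝ => 1 + c * (m : ℝ) / (2 * lam0) * t := by
      funext s
      simp only [hfdef]
      ring
    rw [h2]
    exact h1
  set lam : ℝ → ℝ := fun t => lam0 * f t ^ p with hlamdef
  set mu : ℝ → ℝ := fun t => c * f t ^ (p - 1) with hmudef
  have hAeq : A = fun t => lam t • b := funext hA
  have hlamD : ∀ t, 0 < f t → HasDerivAt lam (mu t) t := by
    intro t ht
    have h1 := (Real.hasDerivAt_rpow_const (x := f t) (p := p) (Or.inl ht.ne')).comp t (hf t)
    have h2 := h1.const_mul lam0
    convert h2 using 1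
    · rfl
    · rfl
    · rfl
    simp only [hmudef, hp, Function.comp]
    field_simp
  have hmuD : ∀ t, 0 < f t →
      HasDerivAt mu (c ^ 2 * (2 - (m : ℝ)) / (2 * lam0) * f t ^ (p - 2)) t := by
    intro t ht
    have h1 := (Real.hasDerivAt_rpow_const (x := f t) (p := p - 1) (Or.inl ht.ne')).comp t (hf t)
    have h2 := h1.const_mul c
    convert h2 using 1
    · rfl
    · rfl
    · rfl
    have : p - 1 - 1 = p - 2 := by ring
    simp only [hp, Function.comp, this]
    field_simp
    ring
  have hAD : ∀ t, 0 < f t → HasDerivAt A (mu t • b) t := by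
    intro t ht
    rw [hAeq]
    exact (hlamD t ht).smul_const b
  have hf0 : f 0 = 1 := by simp [hfdef]
  have hlampos : ∀ t, 0 < f t → 0 < lam t := fun t ht => by
    exact mul_pos hlam0 (Real.rpow_pos_of_pos ht p)
  refine ⟨?_, ?_, ?_⟩
  · rw [hA 0]
    simp [hf0]
  · have := hAD 0 (by rw [hf0]; norm_num)
    have hmu0 : mu 0 = c := by simp [hmudef, hf0]
    rwa [hmu0] at this
  · intro t ht
    have ht' : 0 < f t := ht
    constructor
    · -- deriv A agrees with fun s => mu s • b on a neighborhood of t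
      have hopen : IsOpen {s : ℝ | 0 < f s} := by
        have hcont : Continuous f := by
          apply Continuous.add continuous_const
          exact (continuous_const.mul continuous_id).div_const _
        exact isOpen_lt continuous_const hcont
      have hev : (fun s => mu s • b) =ᶠ[nhds t] deriv A := by
        filter_upwards [hopen.mem_nhds ht'] with s hs
        exact ((hAD s hs).deriv).symm
      have hDD : HasDerivAt (fun s => mu s • b)
          ((c ^ 2 * (2 - (m : ℝ)) / (2 * lam0) * f t ^ (p - 2)) • b) t :=
        (hmuD t ht').smul_const b
      have hDD' : HasDerivAt (deriv A)
          ((c ^ 2 * (2 - (m : ℝ)) / (2 * lam0) * f t ^ (p - 2)) • b) t :=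
        hDD.congr_of_eventuallyEq hev.symm
      have hderivAt : deriv A t = mu t • b := (hAD t ht').deriv
      have hAt : A t = lam t • b := hA t
      rw [hderivAt, hAt, geoRHS_smul_aux b hu _ _ (hlampos t ht').ne']
      convert hDD' using 2
      -- scalar identity
      have key : f t ^ (p - 2) * f t ^ p = f t ^ (p - 1) * f t ^ (p - 1) := by
        rw [← Real.rpow_add ht', ← Real.rpow_add ht']
        ring_nf
      have hfp : (0 : ℝ) < f t ^ p := Real.rpow_pos_of_pos ht' p
      rw [hmudef, hlamdef]
      field_simp
      linear_combination (c ^ 2 * ((m : ℝ) - 2)) * key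
    · exact ⟨lam t, hlampos t ht', hA t⟩
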